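/- Let G be a group, u : G → ℝ a homomorphism, g ∈ G with u(g) < 0, and L > 0. Write λ ≡_L μ when T_L(λ - μ) = 0. Then for λ, μ ∈ Λ: λ ≡_L (1 + g + g² + ⋯)·μ holds if and only if (1 - g)·λ ≡_L μ holds, provided every element of the supports of λ, μ has u-value at most 0. -/
import Mathlib


/-- The Novikov condition. -/
def NovCond {G : Type*} [Group G] (u : G → ℝ) (f : G → ℤ) : Prop :=
  ∀ L : ℝ, {h : G | f h ≠ 0 ∧ L < u h}.Finite

/-- The convolution product of two formal series. -/
noncomputable def conv {G : Type*} [Group G] (f g : G → ℤ) : G → ℤ :=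
  fun h => ∑ᶠ p : G, f p * g (p⁻¹ * h)

open Classical in
/-- The Dirac series concentrated at an element `a`. -/
noncomputable def delta {G : Type*} [Group G] (a : G) : G → ℤ :=
  fun h => if h = a then 1 else 0

open Classical in
/-- The geometric series `1 + g + g² + g³ + ⋯`. -/
noncomputable def geom {G : Type*} [Group G] (g : G) : G → ℤ :=
  fun h => if ∃ j : ℕ, h = g ^ j then 1 else 0

open Classical in
/-- The `L`-truncation. -/
noncomputable def trunc {G : Type*} [Group G] (u : G → ℝ) (L : ℝ) (f : G → ℤ) : G → ℤ :=
  fun h => if -L < u h then f h else 0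

section Aux
variable {G : Type*} [Group G] (u : G → ℝ)
  (hu : ∀ a b : G, u (a * b) = u a + u b)

include hu

lemma aux_u_one : u 1 = 0 := by
  have := hu 1 1; simp at this; linarith

lemma aux_u_inv (a : G) : u a⁻¹ = -u a := by
  have := hu a⁻¹ a; simp [aux_u_one u hu] at this; linarith

lemma aux_u_pow (g : G) (j : ℕ) : u (g ^ j) = j * u g := by
  induction j with
  | zero => simp [aux_u_one u hu]
  | succ n ih => rw [pow_succ, hu, ih]; push_cast; ring

lemma aux_pow_inj {g : G} (hg : u g < 0) : Function.Injective (g ^ · : ℕ → G) := by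
  intro i j hij
  simp only at hij
  have : (i : ℝ) * u g = (j : ℝ) * u g := by
    rw [← aux_u_pow u hu, ← aux_u_pow u hu, hij]
  have : (i : ℝ) = j := mul_right_cancel₀ (ne_of_lt hg) this
  exact_mod_cast this

lemma conv_delta_sub (g : G) (hg : u g < 0) (lam : G → ℤ) (h : G) :
    conv (delta (1 : G) - delta g) lam h = lam h - lam (g⁻¹ * h) := by
  classical
  have hg1 : g ≠ 1 := by
    intro e; rw [e] at hg; simp [aux_u_one u hu] at hg
  have hsub : (Function.support fun p => (delta (1 : G) - delta g) p * lam (p⁻¹ * h))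
      ⊆ (({1, g} : Finset G) : Set G) := by
    intro p hp
    simp only [Function.mem_support, Pi.sub_apply, delta] at hp
    by_contra hmem
    simp only [Finset.coe_insert, Finset.coe_singleton, Set.mem_insert_iff,
      Set.mem_singleton_iff, not_or] at hmem
    rw [if_neg hmem.1, if_neg hmem.2] at hp
    simp at hp
  rw [conv, finsum_eq_sum_of_support_subset _ hsub]
  rw [Finset.sum_insert (by simp [hg1.symm]), Finset.sum_singleton]
  simp [delta, hg1, hg1.symm]
  ring

lemma conv_geom (g : G) (hg : u g < 0) (mu : G → ℤ) (h : G) (n : ℕ)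
    (hn : ∀ j : ℕ, n ≤ j → mu ((g ^ j)⁻¹ * h) = 0) :
    conv (geom g) mu h = ∑ j ∈ Finset.range n, mu ((g ^ j)⁻¹ * h) := by
  classical
  have hsub : (Function.support fun p => geom g p * mu (p⁻¹ * h))
      ⊆ ((Finset.range n).image (g ^ · : ℕ → G) : Finset G) := by
    intro p hp
    simp only [Function.mem_support, geom] at hp
    have hex : ∃ j : ℕ, p = g ^ j := by
      by_contra hne; rw [if_neg hne] at hp; simp at hp
    obtain ⟨j, rfl⟩ := hex
    have hjn : j < n := by
      by_contra hjge
      rw [if_pos ⟨j, rfl⟩, hn j (le_of_not_gt hjge)] at hp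
      simp at hp
    simp only [Finset.coe_image, Set.mem_image, Finset.mem_coe, Finset.mem_range]
    exact ⟨j, hjn, rfl⟩
  rw [conv, finsum_eq_sum_of_support_subset _ hsub,
    Finset.sum_image (fun i _ j _ hij => aux_pow_inj u hu hg hij)]
  refine Finset.sum_congr rfl fun j _ => ?_
  simp [geom]

end Aux


/-- For series supported in the nonpositive part, the `L`-equality
`λ ≡_L (1 + g + g² + ⋯)·μ` holds if and only if `(1 - g)·λ ≡_L μ` holds. -/
theorem L_equality_unit_equivalence {G : Type*} [Group G] (u : G → ℝ)
    (hu : ∀ a b : G, u (a * b) = u a + u b) (g : G) (hg : u g < 0)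
    (L : ℝ) (hL : 0 < L) (lam mu : G → ℤ)
    (hlam : NovCond u lam) (hmu : NovCond u mu)
    (hlam0 : ∀ h : G, lam h ≠ 0 → u h ≤ 0)
    (hmu0 : ∀ h : G, mu h ≠ 0 → u h ≤ 0) :
    trunc u L (lam - conv (geom g) mu) = 0 ↔
      trunc u L (conv (delta (1 : G) - delta g) lam - mu) = 0 := by
  classical
  have key : ∀ f : G → ℤ, trunc u L f = 0 ↔ ∀ h, -L < u h → f h = 0 := by
    intro f
    constructor
    · intro hf h hh
      have := congrFun hf h
      simpa [trunc, hh] using this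
    · intro hf
      funext h
      by_cases hh : -L < u h
      · simp [trunc, hh, hf h hh]
      · simp [trunc, hh]
  rw [key, key]
  have uval : ∀ (j : ℕ) (h : G), u ((g ^ j)⁻¹ * h) = u h - j * u g := by
    intro j h
    rw [hu, aux_u_inv u hu, aux_u_pow u hu]; ring
  have exn : ∀ h : G, -L < u h → ∃ n : ℕ, ∀ j : ℕ, n ≤ j → 0 < u ((g ^ j)⁻¹ * h) := by
    intro h hh
    obtain ⟨n, hn⟩ := exists_nat_ge (L / (-u g))
    refine ⟨n, fun j hj => ?_⟩
    have hgpos : (0 : ℝ) < -u g := by linarith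
    have hLle : L ≤ (j : ℝ) * (-u g) := by
      calc L = (L / (-u g)) * (-u g) := (div_mul_cancel₀ L hgpos.ne').symm
        _ ≤ (n : ℝ) * (-u g) := mul_le_mul_of_nonneg_right hn hgpos.le
        _ ≤ (j : ℝ) * (-u g) := by
            apply mul_le_mul_of_nonneg_right _ hgpos.le
            exact_mod_cast hj
    rw [uval]
    nlinarith
  constructor
  · intro H h hh
    obtain ⟨n, hn⟩ := exn h hh
    have hmuz : ∀ j, n ≤ j → mu ((g ^ j)⁻¹ * h) = 0 := by
      intro j hj
      by_contra hz
      exact absurd (hmu0 _ hz) (not_le.2 (hn j hj))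
    have h1 : lam h = ∑ j ∈ Finset.range (n + 1), mu ((g ^ j)⁻¹ * h) := by
      have e := H h hh
      simp only [Pi.sub_apply] at e
      rw [conv_geom u hu g hg mu h (n + 1) (fun j hj => hmuz j (by omega))] at e
      omega
    have hh' : -L < u (g⁻¹ * h) := by
      rw [hu, aux_u_inv u hu]; linarith
    have assoc : ∀ j : ℕ, (g ^ j)⁻¹ * (g⁻¹ * h) = (g ^ (j + 1))⁻¹ * h := by
      intro j
      rw [← mul_assoc, ← mul_inv_rev, ← pow_succ']
    have h2 : lam (g⁻¹ * h) = ∑ j ∈ Finset.range n, mu ((g ^ (j + 1))⁻¹ * h) := by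
      have e := H (g⁻¹ * h) hh'
      simp only [Pi.sub_apply] at e
      rw [conv_geom u hu g hg mu (g⁻¹ * h) n
        (fun j hj => by rw [assoc]; exact hmuz (j + 1) (by omega))] at e
      rw [Finset.sum_congr rfl fun j _ => by rw [assoc j]] at e
      omega
    simp only [Pi.sub_apply]
    rw [conv_delta_sub u hu g hg lam h, h1, h2, Finset.sum_range_succ']
    simp
  · intro H h hh
    have H' : ∀ h', -L < u h' → lam h' = lam (g⁻¹ * h') + mu h' := by
      intro h' hh'
      have e := H h' hh'
      simp only [Pi.sub_apply] at e
      rw [conv_delta_sub u hu g hg] at e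
      omega
    have iter : ∀ n : ℕ,
        lam h = lam ((g ^ n)⁻¹ * h) + ∑ j ∈ Finset.range n, mu ((g ^ j)⁻¹ * h) := by
      intro n
      induction n with
      | zero => simp
      | succ m ih =>
        have hcast : (0 : ℝ) ≤ (m : ℝ) := Nat.cast_nonneg m
        have hhm : -L < u ((g ^ m)⁻¹ * h) := by
          rw [uval]
          nlinarith
        have assoc : g⁻¹ * ((g ^ m)⁻¹ * h) = (g ^ (m + 1))⁻¹ * h := by
          rw [← mul_assoc, ← mul_inv_rev, ← pow_succ]
        rw [ih, H' _ hhm, Finset.sum_range_succ, assoc]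
        ring
    obtain ⟨n, hn⟩ := exn h hh
    have hmuz : ∀ j, n ≤ j → mu ((g ^ j)⁻¹ * h) = 0 := by
      intro j hj
      by_contra hz
      exact absurd (hmu0 _ hz) (not_le.2 (hn j hj))
    have hlamz : lam ((g ^ n)⁻¹ * h) = 0 := by
      by_contra hz
      exact absurd (hlam0 _ hz) (not_le.2 (hn n le_rfl))
    simp only [Pi.sub_apply]
    rw [conv_geom u hu g hg mu h n hmuz, iter n, hlamz]
    ring
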